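/- Let h : ℝ³ × ℝ³ → [0,∞) be measurable with ‖⟨x⟩^{3+ε}⟨p⟩⁵ h‖_{L^∞} < ∞ for some ε > 0. Then for any c ≥ 1, 0 ≤ θ ≤ 1, and t > 0, the quantity T^θ[h](x) = ∫_{ℝ³} h(x − t v_c^θ(p), p) dp satisfies ‖T^θ[h]‖_{L^∞_x} ≤ C t^{−3} ‖⟨x⟩^{3+ε}⟨p⟩⁵ h‖_{L^∞} for a constant C independent of c, θ, t. -/

import Mathlib

open MeasureTheory

noncomputable section

/-- The relativistic Lorentz factor `γ_c(p) = √(1 + |p|²/c²)`. -/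
def gam (c : ℝ) (p : EuclideanSpace ℝ (Fin 3)) : ℝ := Real.sqrt (1 + ‖p‖ ^ 2 / c ^ 2)

/-- The interpolated velocity `v_c^θ(p) = θ p/γ_c(p) + (1−θ) p`. -/
def velθ (θ c : ℝ) (p : EuclideanSpace ℝ (Fin 3)) : EuclideanSpace ℝ (Fin 3) :=
  (θ / gam c p + (1 - θ)) • p

/-- The Japanese bracket `⟨y⟩ = √(1 + |y|²)`. -/
def jb (y : EuclideanSpace ℝ (Fin 3)) : ℝ := Real.sqrt (1 + ‖y‖ ^ 2)

abbrev E3 := EuclideanSpace ℝ (Fin 3)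

lemma one_le_gam (c : ℝ) (p : E3) : 1 ≤ gam c p := by
  have h0 : (0:ℝ) ≤ ‖p‖ ^ 2 / c ^ 2 := by positivity
  have h : Real.sqrt 1 ≤ Real.sqrt (1 + ‖p‖ ^ 2 / c ^ 2) := Real.sqrt_le_sqrt (by linarith)
  simp only [Real.sqrt_one] at h; exact h

lemma gam_pos (c : ℝ) (p : E3) : 0 < gam c p := lt_of_lt_of_le one_pos (one_le_gam c p)

lemma gam_sq (c : ℝ) (hc : c ≠ 0) (p : E3) : gam c p ^ 2 = 1 + ‖p‖ ^ 2 / c ^ 2 := by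
  rw [gam, Real.sq_sqrt]; positivity

lemma one_le_jb (p : E3) : 1 ≤ jb p := by
  have h : Real.sqrt 1 ≤ Real.sqrt (1 + ‖p‖ ^ 2) :=
    Real.sqrt_le_sqrt (by nlinarith [sq_nonneg ‖p‖])
  simp only [Real.sqrt_one] at h; exact h

lemma jb_pos (p : E3) : 0 < jb p := lt_of_lt_of_le one_pos (one_le_jb p)

lemma gam_le_jb {c : ℝ} (hc : 1 ≤ c) (p : E3) : gam c p ≤ jb p := by
  apply Real.sqrt_le_sqrt
  have h1 : (1:ℝ) ≤ c ^ 2 := by nlinarith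
  have : ‖p‖ ^ 2 / c ^ 2 ≤ ‖p‖ ^ 2 := by
    apply div_le_of_le_mul₀ (by positivity) (by positivity); nlinarith [sq_nonneg ‖p‖]
  linarith

/-- the derivative of `velθ θ c` at `p`. -/
def Lmap (θ c : ℝ) (p : E3) : E3 →L[ℝ] E3 :=
  (θ / gam c p + (1 - θ)) • (ContinuousLinearMap.id ℝ E3)
    - (θ / (c ^ 2 * gam c p ^ 3)) • ((innerSL ℝ p).smulRight p)

lemma hasFDerivAt_velθ (θ : ℝ) {c : ℝ} (hc : c ≠ 0) (p : E3) :
    HasFDerivAt (velθ θ c) (Lmap θ c p) p := by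
  have hγpos := gam_pos c p
  have hγ : gam c p ≠ 0 := ne_of_gt hγpos
  have harg : (0:ℝ) < 1 + ‖p‖ ^ 2 / c ^ 2 := by positivity
  have h1 : HasFDerivAt (fun q : E3 => ‖q‖ ^ 2) (2 • (innerSL ℝ p)) p := by
    simpa using (hasFDerivAt_id p).norm_sq
  have h2 : HasFDerivAt (fun q : E3 => 1 + ‖q‖ ^ 2 / c ^ 2)
      ((c ^ 2)⁻¹ • (2 • (innerSL ℝ p))) p := by
    have := (h1.const_mul ((c ^ 2)⁻¹)).add_const 1
    have heq : (fun q : E3 => (c ^ 2)⁻¹ * ‖q‖ ^ 2 + 1) = fun q : E3 => 1 + ‖q‖ ^ 2 / c ^ 2 := by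
      funext q; rw [div_eq_mul_inv]; ring
    rw [heq] at this
    exact this
  have h3 : HasFDerivAt (gam c)
      ((1 / (2 * gam c p)) • ((c ^ 2)⁻¹ • (2 • (innerSL ℝ p)))) p := by
    have := h2.sqrt (ne_of_gt harg)
    exact this
  have h4 : HasFDerivAt (fun q : E3 => (gam c q)⁻¹)
      ((-(gam c p ^ 2)⁻¹) • ((1 / (2 * gam c p)) • ((c ^ 2)⁻¹ • (2 • (innerSL ℝ p))))) p := by
    exact (hasDerivAt_inv hγ).comp_hasFDerivAt p h3
  have h5 := ((h4.const_mul θ).add_const (1 - θ)).smul (hasFDerivAt_id p)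
  have heq2 : (fun q : E3 => (θ * (gam c q)⁻¹ + (1 - θ)) • q) = velθ θ c := by
    funext q; rw [velθ, div_eq_mul_inv]
  simp only [id_eq] at h5
  replace h5 : HasFDerivAt (fun q : E3 => (θ * (gam c q)⁻¹ + (1 - θ)) • q)
    ((θ * (gam c p)⁻¹ + (1 - θ)) • ContinuousLinearMap.id ℝ E3 +
      (θ • -(gam c p ^ 2)⁻¹ • (1 / (2 * gam c p)) • (c ^ 2)⁻¹ • 2 • (innerSL ℝ p)).smulRight p) p := h5
  rw [heq2] at h5
  convert h5 using 1
  refine ContinuousLinearMap.ext fun y => ?_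
  simp only [Lmap, ContinuousLinearMap.coe_sub', Pi.sub_apply, ContinuousLinearMap.coe_smul',
    Pi.smul_apply, ContinuousLinearMap.coe_id', id_eq, ContinuousLinearMap.smulRight_apply,
    ContinuousLinearMap.add_apply, ContinuousLinearMap.coe_comp', Function.comp_apply,
    innerSL_apply_apply, smul_smul, ContinuousLinearMap.smul_apply, smul_eq_mul]
  match_scalars
  · field_simp
  · field_simp
    ring

lemma det_Lmap (θ c : ℝ) (p : E3) :
    LinearMap.det ((Lmap θ c p : E3 →L[ℝ] E3) : E3 →ₗ[ℝ] E3)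
      = (θ / gam c p + (1 - θ)) ^ 2 *
        ((θ / gam c p + (1 - θ)) - θ / (c ^ 2 * gam c p ^ 3) * ‖p‖ ^ 2) := by
  set a := θ / gam c p + (1 - θ) with ha
  set bb := θ / (c ^ 2 * gam c p ^ 3) with hbb
  set B := (EuclideanSpace.basisFun (Fin 3) ℝ).toBasis with hB
  rw [← LinearMap.det_toMatrix B]
  have hA : LinearMap.toMatrix B B ((Lmap θ c p : E3 →L[ℝ] E3) : E3 →ₗ[ℝ] E3)
      = Matrix.of (fun i j => a * (if i = j then 1 else 0) - bb * (p j * p i)) := by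
    ext i j
    rw [LinearMap.toMatrix_apply]
    simp [Lmap, hB, EuclideanSpace.basisFun_repr, EuclideanSpace.basisFun_apply,
      EuclideanSpace.single_apply, real_inner_comm, EuclideanSpace.inner_single_right,
      mul_comm, ha, hbb]
  rw [hA, Matrix.det_fin_three]
  have hnorm : ‖p‖ ^ 2 = p 0 ^ 2 + p 1 ^ 2 + p 2 ^ 2 := by
    have := EuclideanSpace.norm_eq p
    rw [this, Real.sq_sqrt (by positivity)]
    simp [Fin.sum_univ_three]
  simp only [Matrix.of_apply, Fin.reduceEq, reduceIte, if_true, if_false]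
  rw [hnorm]
  ring

lemma coef_lower {θ : ℝ} (c : ℝ) (hθ1 : θ ≤ 1) (p : E3) (k : ℕ) :
    (gam c p ^ k)⁻¹ ≤ θ / gam c p ^ k + (1 - θ) := by
  have hγ1 : 1 ≤ gam c p ^ k := one_le_pow₀ (one_le_gam c p)
  have hγ0 : (0:ℝ) < gam c p ^ k := lt_of_lt_of_le one_pos hγ1
  rw [div_add' _ _ _ (ne_of_gt hγ0), inv_eq_one_div, div_le_div_iff₀ hγ0 hγ0]
  nlinarith [mul_nonneg (mul_nonneg (sub_nonneg.mpr hθ1) (sub_nonneg.mpr hγ1)) (le_of_lt hγ0)]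

lemma det_Lmap_lower {θ c : ℝ} (hc : 1 ≤ c) (hθ0 : 0 ≤ θ) (hθ1 : θ ≤ 1) (p : E3) :
    (jb p ^ 5)⁻¹ ≤ LinearMap.det ((Lmap θ c p : E3 →L[ℝ] E3) : E3 →ₗ[ℝ] E3) := by
  have hc0 : (0:ℝ) < c := lt_of_lt_of_le one_pos hc
  have hγ1 := one_le_gam c p
  have hγ0 : (0:ℝ) < gam c p := gam_pos c p
  have hGγ := gam_le_jb hc p
  have hG1 := one_le_jb p
  rw [det_Lmap]
  have hsq : ‖p‖ ^ 2 = c ^ 2 * (gam c p ^ 2 - 1) := by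
    have h := gam_sq c (ne_of_gt hc0) p
    field_simp at h ⊢
    linarith
  have hfact : θ / gam c p + (1 - θ) - θ / (c ^ 2 * gam c p ^ 3) * ‖p‖ ^ 2
      = θ / gam c p ^ 3 + (1 - θ) := by
    rw [hsq]; field_simp; ring
  rw [hfact]
  have h1 : (gam c p ^ 1)⁻¹ ≤ θ / gam c p ^ 1 + (1 - θ) := coef_lower c hθ1 p 1
  have h3 : (gam c p ^ 3)⁻¹ ≤ θ / gam c p ^ 3 + (1 - θ) := coef_lower c hθ1 p 3
  rw [pow_one] at h1
  have hpos1 : (0:ℝ) < (gam c p)⁻¹ := by positivity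
  have hpos3 : (0:ℝ) < (gam c p ^ 3)⁻¹ := by positivity
  calc (jb p ^ 5)⁻¹ ≤ (gam c p ^ 5)⁻¹ := by
        apply inv_anti₀ (by positivity)
        exact pow_le_pow_left₀ (by positivity) hGγ 5
    _ = ((gam c p)⁻¹) ^ 2 * (gam c p ^ 3)⁻¹ := by
        rw [← inv_pow]; field_simp
    _ ≤ (θ / gam c p + (1 - θ)) ^ 2 * (θ / gam c p ^ 3 + (1 - θ)) := by
        apply mul_le_mul _ h3 (le_of_lt hpos3) (by positivity)
        exact pow_le_pow_left₀ (le_of_lt hpos1) h1 2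

lemma coef_pos {θ c : ℝ} (hθ1 : θ ≤ 1) (p : E3) : 0 < θ / gam c p + (1 - θ) :=
  lt_of_lt_of_le (inv_pos.2 (pow_pos (gam_pos c p) 1))
    (by simpa using coef_lower c hθ1 p 1)

lemma velθ_injective {θ c : ℝ} (hc : 1 ≤ c) (hθ0 : 0 ≤ θ) (hθ1 : θ ≤ 1) :
    Function.Injective (velθ θ c) := by
  have hc0 : (0:ℝ) < c := lt_of_lt_of_le one_pos hc
  -- strict monotonicity of the radial profile
  have key : ∀ r s : ℝ, 0 ≤ r → r < s →
      (θ / Real.sqrt (1 + r ^ 2 / c ^ 2) + (1 - θ)) * r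
        < (θ / Real.sqrt (1 + s ^ 2 / c ^ 2) + (1 - θ)) * s := by
    intro r s hr hrs
    have hs : 0 < s := lt_of_le_of_lt hr hrs
    have hγr : (0:ℝ) < Real.sqrt (1 + r ^ 2 / c ^ 2) := Real.sqrt_pos.2 (by positivity)
    have hγs : (0:ℝ) < Real.sqrt (1 + s ^ 2 / c ^ 2) := Real.sqrt_pos.2 (by positivity)
    have hA : r / Real.sqrt (1 + r ^ 2 / c ^ 2) < s / Real.sqrt (1 + s ^ 2 / c ^ 2) := by
      rw [div_lt_div_iff₀ hγr hγs]
      apply lt_of_pow_lt_pow_left₀ 2 (by positivity)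
      rw [mul_pow, mul_pow, Real.sq_sqrt (by positivity), Real.sq_sqrt (by positivity)]
      have : r ^ 2 < s ^ 2 := by nlinarith
      have hdiv : r ^ 2 * (s ^ 2 / c ^ 2) = s ^ 2 * (r ^ 2 / c ^ 2) := by ring
      nlinarith
    have hB : (0:ℝ) < s - r := by linarith
    rcases eq_or_lt_of_le hθ0 with h0 | h0
    · rw [← h0]; simpa using hrs
    · have e1 : (θ / Real.sqrt (1 + r ^ 2 / c ^ 2) + (1 - θ)) * r
          = θ * (r / Real.sqrt (1 + r ^ 2 / c ^ 2)) + (1 - θ) * r := by ring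
      have e2 : (θ / Real.sqrt (1 + s ^ 2 / c ^ 2) + (1 - θ)) * s
          = θ * (s / Real.sqrt (1 + s ^ 2 / c ^ 2)) + (1 - θ) * s := by ring
      rw [e1, e2]
      have h1 : θ * (r / Real.sqrt (1 + r ^ 2 / c ^ 2)) < θ * (s / Real.sqrt (1 + s ^ 2 / c ^ 2)) :=
        (mul_lt_mul_iff_right₀ h0).2 hA
      have h2 : (1 - θ) * r ≤ (1 - θ) * s := by nlinarith
      linarith
  intro p q hpq
  have hgp : gam c p = Real.sqrt (1 + ‖p‖ ^ 2 / c ^ 2) := rfl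
  have hgq : gam c q = Real.sqrt (1 + ‖q‖ ^ 2 / c ^ 2) := rfl
  have hnorm : (θ / Real.sqrt (1 + ‖p‖ ^ 2 / c ^ 2) + (1 - θ)) * ‖p‖
      = (θ / Real.sqrt (1 + ‖q‖ ^ 2 / c ^ 2) + (1 - θ)) * ‖q‖ := by
    have h1 := congrArg norm hpq
    rw [velθ, velθ, norm_smul, norm_smul, Real.norm_eq_abs, Real.norm_eq_abs,
      abs_of_pos (coef_pos hθ1 p), abs_of_pos (coef_pos hθ1 q)] at h1
    rw [← hgp, ← hgq]; exact h1
  have hnn : ‖p‖ = ‖q‖ := by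
    rcases lt_trichotomy ‖p‖ ‖q‖ with h | h | h
    · exact absurd hnorm (ne_of_lt (key _ _ (norm_nonneg p) h))
    · exact h
    · exact absurd hnorm (ne_of_gt (key _ _ (norm_nonneg q) h))
  have hgam : gam c p = gam c q := by rw [hgp, hgq, hnn]
  rw [velθ, velθ, hgam] at hpq
  exact smul_right_injective _ (ne_of_gt (coef_pos hθ1 q)) hpq

lemma jb_eq_rpow (y : E3) : jb y = (1 + ‖y‖ ^ 2) ^ ((1:ℝ)/2) := by
  rw [jb, Real.sqrt_eq_rpow]

lemma jb_rpow (y : E3) (β : ℝ) : jb y ^ (-β) = (1 + ‖y‖ ^ 2) ^ (-β/2) := by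
  rw [jb_eq_rpow, ← Real.rpow_mul (by positivity)]
  norm_num
  ring_nf

lemma jb_rpow_integrable {β : ℝ} (hβ : 3 < β) :
    Integrable (fun y : E3 => jb y ^ (-β)) := by
  have h3 : (Module.finrank ℝ E3 : ℝ) < β := by
    rw [finrank_euclideanSpace]; simpa using hβ
  have h := integrable_rpow_neg_one_add_norm_sq (E := E3) (μ := volume) h3
  exact h.congr (Filter.Eventually.of_forall fun y => (jb_rpow y β).symm)

lemma jb_rpow_continuous (β : ℝ) : Continuous (fun y : E3 => jb y ^ (-β)) := by
  have : Continuous (fun y : E3 => (1 + ‖y‖ ^ 2) ^ (-β/2)) := by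
    apply Continuous.rpow_const
    · exact continuous_const.add (continuous_norm.pow 2)
    · intro y; left; positivity
  exact this.congr fun y => (jb_rpow y β).symm

lemma gam_continuous (c : ℝ) : Continuous (gam c) := by
  unfold gam
  exact (continuous_const.add ((continuous_norm.pow 2).div_const _)).sqrt

lemma velθ_continuous (θ c : ℝ) : Continuous (velθ θ c) := by
  unfold velθ
  refine Continuous.smul (f := fun p : E3 => θ / gam c p + (1 - θ)) (g := id) ?_ continuous_id
  exact (continuous_const.div (gam_continuous c) fun p => ne_of_gt (gam_pos c p)).add
    continuous_const

lemma jb_continuous : Continuous jb := by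
  unfold jb; exact (continuous_const.add (continuous_norm.pow 2)).sqrt

lemma F_integral {β : ℝ} (hβ : 3 < β) {t : ℝ} (ht : 0 < t) (x : E3) :
    Integrable (fun w : E3 => jb (x - t • w) ^ (-β)) ∧
    (∫ w : E3, jb (x - t • w) ^ (-β)) = (t ^ 3)⁻¹ * ∫ y : E3, jb y ^ (-β) := by
  have hbase := jb_rpow_integrable hβ
  have h1 : Integrable (fun u : E3 => jb (x - u) ^ (-β)) :=
    (integrable_comp_sub_left (fun y : E3 => jb y ^ (-β)) x).2 hbase
  constructor
  · exact (integrable_comp_smul_iff volume (fun u : E3 => jb (x - u) ^ (-β))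
      (ne_of_gt ht)).2 h1
  · have h2 : (∫ w : E3, jb (x - t • w) ^ (-β))
        = |((t:ℝ) ^ Module.finrank ℝ E3)⁻¹| • ∫ u : E3, jb (x - u) ^ (-β) :=
      Measure.integral_comp_smul volume (fun u : E3 => jb (x - u) ^ (-β)) t
    rw [h2, integral_sub_left_eq_self (fun y : E3 => jb y ^ (-β)) volume x,
      finrank_euclideanSpace]
    simp only [Fintype.card_fin, smul_eq_mul]
    rw [abs_of_nonneg (by positivity)]


/-- Dispersive estimate for the free flow: `‖T^θ[h]‖_{L^∞} ≲ t⁻³ ‖⟨x⟩^{3+ε}⟨p⟩⁵ h‖_{L^∞}`,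
uniformly in `c ≥ 1`, `θ ∈ [0,1]`, `t > 0`. -/
theorem stmt16 (ε : ℝ) (hε : 0 < ε) :
    ∃ C > 0, ∀ (c θ t : ℝ), 1 ≤ c → 0 ≤ θ → θ ≤ 1 → 0 < t →
      ∀ (h : EuclideanSpace ℝ (Fin 3) → EuclideanSpace ℝ (Fin 3) → ℝ) (M : ℝ),
        Measurable (Function.uncurry h) →
        (∀ x p, 0 ≤ h x p) →
        (∀ x p, jb x ^ (3 + ε) * jb p ^ 5 * h x p ≤ M) →
        ∀ x : EuclideanSpace ℝ (Fin 3),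
          (∫ p, h (x - t • velθ θ c p) p) ≤ C * t⁻¹ ^ 3 * M := by
  have hβ : 3 < 3 + ε := by linarith
  set K := ∫ y : E3, jb y ^ (-(3+ε)) with hKdef
  have hK0 : 0 ≤ K :=
    integral_nonneg fun y => Real.rpow_nonneg (Real.sqrt_nonneg _) _
  refine ⟨K + 1, by positivity, ?_⟩
  intro c θ t hc hθ0 hθ1 ht h M hmeas hpos hbound x
  have hc0 : (0:ℝ) < c := lt_of_lt_of_le one_pos hc
  set β : ℝ := 3 + ε with hβd
  set v := velθ θ c with hv
  set F : E3 → ℝ := fun w => jb (x - t • w) ^ (-β) with hF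
  set φ : E3 → ℝ := fun p => F (v p) * (jb p ^ 5)⁻¹ with hφ
  have hM0 : 0 ≤ M := by
    refine le_trans ?_ (hbound 0 0)
    exact mul_nonneg (mul_nonneg (Real.rpow_nonneg (Real.sqrt_nonneg _) _)
      (pow_nonneg (Real.sqrt_nonneg _) _)) (hpos 0 0)
  have hFnn : ∀ w, 0 ≤ F w := fun w => Real.rpow_nonneg (Real.sqrt_nonneg _) _
  have hφnn : ∀ p, 0 ≤ φ p := fun p => mul_nonneg (hFnn _) (inv_nonneg.2 (pow_nonneg (Real.sqrt_nonneg _) _))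
  have hφcont : Continuous φ := by
    refine Continuous.mul ?_ ?_
    · exact (jb_rpow_continuous β).comp
        (continuous_const.sub ((velθ_continuous θ c).const_smul t))
    · exact ((jb_continuous.pow 5).inv₀ fun p => ne_of_gt (pow_pos (jb_pos p) 5))
  have hdLow : ∀ p : E3, ENNReal.ofReal (φ p)
      ≤ ENNReal.ofReal |(Lmap θ c p).det| * ENNReal.ofReal (F (v p)) := by
    intro p
    rw [← ENNReal.ofReal_mul (abs_nonneg _)]
    apply ENNReal.ofReal_le_ofReal
    calc φ p = F (v p) * (jb p ^ 5)⁻¹ := rfl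
      _ ≤ F (v p) * |(Lmap θ c p).det| :=
          mul_le_mul_of_nonneg_left
            (le_trans (det_Lmap_lower hc hθ0 hθ1 p) (le_abs_self _)) (hFnn _)
      _ = |(Lmap θ c p).det| * F (v p) := mul_comm _ _
  have himg := lintegral_image_eq_lintegral_abs_det_fderiv_mul (volume : Measure E3)
      MeasurableSet.univ
      (fun p _ => (hasFDerivAt_velθ θ (ne_of_gt hc0) p).hasFDerivWithinAt)
      ((velθ_injective hc hθ0 hθ1).injOn) (fun w => ENNReal.ofReal (F w))
  rw [Measure.restrict_univ] at himg
  have hFint : Integrable F := (F_integral hβ ht x).1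
  have hFeq : (∫ w, F w) = (t ^ 3)⁻¹ * K := (F_integral hβ ht x).2
  have hchain : (∫⁻ p, ENNReal.ofReal (φ p)) ≤ ENNReal.ofReal ((t ^ 3)⁻¹ * K) := by
    calc (∫⁻ p, ENNReal.ofReal (φ p))
        ≤ ∫⁻ p, ENNReal.ofReal |(Lmap θ c p).det| * ENNReal.ofReal (F (v p)) :=
          lintegral_mono hdLow
      _ = ∫⁻ w in v '' Set.univ, ENNReal.ofReal (F w) := himg.symm
      _ ≤ ∫⁻ w, ENNReal.ofReal (F w) := setLIntegral_le_lintegral _ _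
      _ = ENNReal.ofReal (∫ w, F w) :=
          (ofReal_integral_eq_lintegral_ofReal hFint
            (Filter.Eventually.of_forall hFnn)).symm
      _ = ENNReal.ofReal ((t ^ 3)⁻¹ * K) := by rw [hFeq]
  have hφint : Integrable φ := by
    refine ⟨hφcont.aestronglyMeasurable, ?_⟩
    rw [hasFiniteIntegral_iff_ofReal (Filter.Eventually.of_forall hφnn)]
    exact lt_of_le_of_lt hchain ENNReal.ofReal_lt_top
  have hφval : (∫ p, φ p) ≤ (t ^ 3)⁻¹ * K := by
    rw [integral_eq_lintegral_of_nonneg_ae (Filter.Eventually.of_forall hφnn)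
      hφcont.aestronglyMeasurable]
    exact ENNReal.toReal_le_of_le_ofReal (by positivity) hchain
  have hA : ∀ p : E3, h (x - t • v p) p ≤ M * φ p := by
    intro p
    have hjy : 0 < jb (x - t • v p) := jb_pos _
    have hjp : 0 < jb p := jb_pos p
    have h1 : h (x - t • v p) p * (jb (x - t • v p) ^ β * jb p ^ 5) ≤ M := by
      calc h (x - t • v p) p * (jb (x - t • v p) ^ β * jb p ^ 5)
          = jb (x - t • v p) ^ β * jb p ^ 5 * h (x - t • v p) p := by ring
        _ ≤ M := hbound _ p
    have hrp : (0:ℝ) < jb (x - t • v p) ^ β := Real.rpow_pos_of_pos hjy β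
    have h2 : M * φ p = M / (jb (x - t • v p) ^ β * jb p ^ 5) := by
      have hFv : F (v p) = (jb (x - t • v p) ^ β)⁻¹ := by
        rw [hF]
        simp only []
        rw [Real.rpow_neg hjy.le]
      rw [hφ]
      simp only []
      rw [hFv]
      field_simp
    rw [h2, le_div_iff₀ (by positivity)]
    exact h1
  calc (∫ p, h (x - t • v p) p) ≤ ∫ p, M * φ p :=
        integral_mono_of_nonneg (Filter.Eventually.of_forall fun p => hpos _ _)
          (hφint.const_mul M) (Filter.Eventually.of_forall hA)
    _ = M * ∫ p, φ p := integral_const_mul M φ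
    _ ≤ M * ((t ^ 3)⁻¹ * K) := mul_le_mul_of_nonneg_left hφval hM0
    _ ≤ (K + 1) * t⁻¹ ^ 3 * M := by
        rw [inv_pow]
        nlinarith [mul_nonneg hM0 (le_of_lt (inv_pos.2 (pow_pos ht 3)))]
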